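/- For every R ≥ 1, every d ≥ 1 and every n ≥ 2, there is an (R+1)-fat cake C ⊂ R^d such that no partition of C into n pieces, each m'R-fat for some m' ≤ (n−1)^{1/d}, gives every agent value exactly 1/n of the total, for suitably chosen identical value measures. Concretely: let C be the union of a unit cube (containing n−1+ε units of value, uniformly) and an attached box of length R and thickness δ with a pool of 1−ε units of value at its far end; for δ small enough, any piece overlapping both value regions must be contained-cube of side ≤ max(δ, (1/(n−1+ε))^{1/d}) while its smallest containing cube has side ≥ R, so it is not m'R-fat. -/

import Mathlib

open MeasureTheory
open scoped ENNReal

noncomputable section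
set_option maxHeartbeats 1000000

/-- The axis-parallel cube in `ℝ^d` with lower corner `a` and side-length `L`. -/
def axisCube {d : ℕ} (a : Fin d → ℝ) (L : ℝ) : Set (EuclideanSpace ℝ (Fin d)) :=
  {x | ∀ i, a i ≤ x i ∧ x i ≤ a i + L}

/-- A `d`-dimensional piece `P` is `R`-fat if it contains a cube `B⁻` and is contained in a
*parallel* cube `B⁺` with `len(B⁺)/len(B⁻) ≤ R` (cubes in arbitrary common orientation,
given by an isometry of `ℝ^d`). -/
def RFat {d : ℕ} (R : ℝ) (P : Set (EuclideanSpace ℝ (Fin d))) : Prop :=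
  ∃ (f : EuclideanSpace ℝ (Fin d) ≃ᵢ EuclideanSpace ℝ (Fin d))
    (a b : Fin d → ℝ) (L₁ L₂ : ℝ), 0 < L₁ ∧
      f '' axisCube a L₁ ⊆ P ∧ P ⊆ f '' axisCube b L₂ ∧ L₂ / L₁ ≤ R

namespace SlimAux

variable {d : ℕ}

lemma axisCube_eq_preimage (a : Fin d → ℝ) (L : ℝ) :
    axisCube a L = (MeasurableEquiv.toLp 2 (Fin d → ℝ)).symm ⁻¹'
      (Set.univ.pi fun i => Set.Icc (a i) (a i + L)) := by
  ext x
  constructor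
  · intro h
    exact Set.mem_pi.2 fun i _ => ⟨(h i).1, (h i).2⟩
  · intro h i
    exact (Set.mem_pi.1 h i trivial : _)

lemma measurableSet_axisCube (a : Fin d → ℝ) (L : ℝ) : MeasurableSet (axisCube a L) := by
  rw [axisCube_eq_preimage]
  exact (MeasurableEquiv.measurable _) (MeasurableSet.univ_pi fun i => measurableSet_Icc)

lemma volume_axisCube (a : Fin d → ℝ) {L : ℝ} (hL : 0 ≤ L) :
    volume (axisCube a L) = ENNReal.ofReal (L ^ d) := by
  rw [axisCube_eq_preimage,
    (EuclideanSpace.volume_preserving_symm_measurableEquiv_toLp (Fin d)).measure_preimage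
      ((MeasurableSet.univ_pi fun i => measurableSet_Icc).nullMeasurableSet)]
  rw [volume_pi_pi]
  simp [Real.volume_Icc, ENNReal.ofReal_pow hL]

lemma volume_isometryEquiv_image (f : EuclideanSpace ℝ (Fin d) ≃ᵢ EuclideanSpace ℝ (Fin d))
    {S : Set (EuclideanSpace ℝ (Fin d))} (hS : MeasurableSet S) :
    volume (f '' S) = volume S := by
  have h1 : f '' S = (fun y => y + f 0) ''
      ((f.toRealLinearIsometryEquiv : EuclideanSpace ℝ (Fin d) → EuclideanSpace ℝ (Fin d)) '' S) := by
    rw [Set.image_image]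
    apply Set.image_congr
    intro x _
    simp
  rw [h1]
  have h2 : ((f.toRealLinearIsometryEquiv : EuclideanSpace ℝ (Fin d) → EuclideanSpace ℝ (Fin d)) '' S)
      = f.toRealLinearIsometryEquiv.symm ⁻¹' S := by
    ext y
    simp only [Set.mem_image, Set.mem_preimage,
      IsometryEquiv.toRealLinearIsometryEquiv_symm_apply]
    constructor
    · rintro ⟨x, hx, rfl⟩
      simpa [sub_add_cancel] using hx
    · intro hy
      exact ⟨f.symm (y + f 0), hy, by simp [sub_eq_iff_eq_add]⟩
  have h4 : (fun y : EuclideanSpace ℝ (Fin d) => y + f 0) '' (f.toRealLinearIsometryEquiv.symm ⁻¹' S)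
      = (fun y : EuclideanSpace ℝ (Fin d) => y + (-(f 0))) ⁻¹' (f.toRealLinearIsometryEquiv.symm ⁻¹' S) := by
    ext y
    constructor
    · rintro ⟨x, hx, rfl⟩; simpa using hx
    · intro hy; exact ⟨y + -(f 0), hy, by simp⟩
  rw [h2, h4, measure_preimage_add_right,
    f.toRealLinearIsometryEquiv.symm.measurePreserving.measure_preimage hS.nullMeasurableSet]

lemma dist_coord_le (x y : EuclideanSpace ℝ (Fin d)) (i : Fin d) :
    dist (x i) (y i) ≤ dist x y := by
  rw [EuclideanSpace.dist_eq]
  have h1 : dist (x i) (y i) ^ 2 ≤ ∑ j, dist (x j) (y j) ^ 2 :=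
    Finset.single_le_sum (f := fun j => dist (x j) (y j) ^ 2)
      (fun j _ => sq_nonneg _) (Finset.mem_univ i)
  calc dist (x i) (y i) = Real.sqrt (dist (x i) (y i) ^ 2) := by
        rw [Real.sqrt_sq dist_nonneg]
    _ ≤ _ := Real.sqrt_le_sqrt h1

lemma dist_le_sqrt_mul {x y : EuclideanSpace ℝ (Fin d)} {L : ℝ} (hL : 0 ≤ L)
    (h : ∀ i, dist (x i) (y i) ≤ L) : dist x y ≤ Real.sqrt d * L := by
  rw [EuclideanSpace.dist_eq]
  have h1 : ∑ j, dist (x j) (y j) ^ 2 ≤ (d : ℝ) * L ^ 2 := by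
    calc ∑ j, dist (x j) (y j) ^ 2 ≤ ∑ _j : Fin d, L ^ 2 :=
          Finset.sum_le_sum fun j _ => pow_le_pow_left₀ dist_nonneg (h j) 2
      _ = (d : ℝ) * L ^ 2 := by simp [Finset.sum_const]
  calc Real.sqrt (∑ j, dist (x j) (y j) ^ 2) ≤ Real.sqrt ((d : ℝ) * L ^ 2) :=
        Real.sqrt_le_sqrt h1
    _ = Real.sqrt d * L := by
        rw [Real.sqrt_mul (by positivity), Real.sqrt_sq hL]

lemma sqrt_mul_le_dist {x y : EuclideanSpace ℝ (Fin d)} {c : ℝ} (hc : 0 ≤ c)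
    (h : ∀ i, c ≤ dist (x i) (y i)) : Real.sqrt d * c ≤ dist x y := by
  rw [EuclideanSpace.dist_eq]
  have h1 : (d : ℝ) * c ^ 2 ≤ ∑ j, dist (x j) (y j) ^ 2 := by
    calc (d : ℝ) * c ^ 2 = ∑ _j : Fin d, c ^ 2 := by simp [Finset.sum_const]
      _ ≤ _ := Finset.sum_le_sum fun j _ => pow_le_pow_left₀ hc (h j) 2
  calc Real.sqrt d * c = Real.sqrt ((d:ℝ) * c ^ 2) := by
        rw [Real.sqrt_mul (by positivity), Real.sqrt_sq hc]
    _ ≤ _ := Real.sqrt_le_sqrt h1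

lemma rpow_one_div_le_self {t : ℝ} (ht : 1 ≤ t) (hd : 1 ≤ d) :
    t ^ ((1 : ℝ) / d) ≤ t := by
  have hd' : (1:ℝ) ≤ (d:ℝ) := by exact_mod_cast hd
  calc t ^ ((1:ℝ)/d) ≤ t ^ (1:ℝ) :=
        Real.rpow_le_rpow_of_exponent_le ht (by
          rw [div_le_one (by linarith)]; exact hd')
    _ = t := Real.rpow_one t

lemma rpow_one_div_pow {t : ℝ} (ht : 0 ≤ t) (hd : 1 ≤ d) :
    (t ^ ((1 : ℝ) / d)) ^ d = t := by
  have hd0 : (d:ℝ) ≠ 0 := by positivity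
  rw [← Real.rpow_natCast (t ^ ((1:ℝ)/d)) d, ← Real.rpow_mul ht,
    one_div_mul_cancel hd0, Real.rpow_one]

lemma final_numeric {d n : ℕ} (hd : 1 ≤ d) (hn : 2 ≤ n) (R β η : ℝ) (hR : 1 ≤ R)
    (hβ : β = 1/(4*(n:ℝ)*(d:ℝ))) (hη : η = 1/(36*(d:ℝ)^2*(n:ℝ)^4*R)) :
    1 + (n:ℝ)*(2*(n:ℝ)*η^d) < (n:ℝ) * ((R-β)^d / (((n:ℝ)-1)*R^d)) := by
  set dR : ℝ := (d:ℝ) with hdRdef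
  set N : ℝ := (n:ℝ) with hNdef
  have hdR : (1:ℝ) ≤ dR := by rw [hdRdef]; exact_mod_cast hd
  have hN : (2:ℝ) ≤ N := by rw [hNdef]; exact_mod_cast hn
  have hR0 : (0:ℝ) < R := by linarith
  have hdpos : 0 < dR := by linarith
  have hNpos : 0 < N := by linarith
  have hβpos : 0 < β := by rw [hβ]; positivity
  have hβ8 : β ≤ 1/8 := by
    rw [hβ, div_le_div_iff₀ (by positivity) (by norm_num)]
    nlinarith
  have hβRself : β/R ≤ β := div_le_self hβpos.le hR
  have hηpos : 0 < η := by rw [hη]; positivity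
  have hNR : 0 < (N-1)*R^d := mul_pos (by linarith) (pow_pos hR0 d)
  have hdRβ : dR * β = 1/(4*N) := by
    rw [hβ]
    field_simp
  have hBern : R^d * (1 - dR*β) ≤ (R-β)^d := by
    have h1 : (1:ℝ) + (d:ℕ)*(-(β/R)) ≤ (1 + (-(β/R)))^d :=
      one_add_mul_le_pow (by
        have h0 : (0:ℝ) ≤ β/R := by positivity
        linarith [hβRself, hβ8]) d
    have h2 : (R - β)^d = R^d * (1 - β/R)^d := by
      rw [← mul_pow]
      congr 1
      field_simp
    rw [h2]
    apply mul_le_mul_of_nonneg_left _ (by positivity)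
    have hβR : β/R ≤ β := by
      rw [div_le_iff₀ hR0]
      nlinarith
    have h3 : 1 - dR*(β/R) ≤ (1 - β/R)^d := by
      calc 1 - dR*(β/R) = 1 + (d:ℕ)*(-(β/R)) := by rw [hdRdef]; push_cast; ring
        _ ≤ (1 + -(β/R))^d := h1
        _ = (1 - β/R)^d := by ring_nf
    calc 1 - dR*β ≤ 1 - dR*(β/R) := by nlinarith
      _ ≤ (1 - β/R)^d := h3
  have hγeq : η*R = 1/(36*dR^2*N^4) := by
    rw [hη]
    field_simp
  have hdR2 : (1:ℝ) ≤ dR^2 := by nlinarith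
  have hN4 : (1:ℝ) ≤ N^4 := by nlinarith [sq_nonneg (N^2 - 1), sq_nonneg N, sq_nonneg (N-1)]
  have h36 : (1:ℝ) ≤ 36*dR^2*N^4 := by nlinarith
  have hγ1 : η*R ≤ 1 := by
    rw [hγeq, div_le_one (by positivity)]
    exact h36
  have hγd : (η*R)^d ≤ η*R := by
    calc (η*R)^d ≤ (η*R)^1 := pow_le_pow_of_le_one (by positivity) hγ1 hd
      _ = η*R := pow_one _
  have hq18 : 2*N^3*(η*R) ≤ 1/18 := by
    rw [hγeq]
    have heq : 2*N^3*(1/(36*dR^2*N^4)) = 1/(18*dR^2*N) := by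
      field_simp
      ring
    rw [heq, div_le_div_iff₀ (by positivity) (by norm_num)]
    nlinarith
  have hRd1 : (1:ℝ) ≤ R^d := by
    calc (1:ℝ) = 1^d := (one_pow d).symm
      _ ≤ R^d := pow_le_pow_left₀ zero_le_one hR d
  have hstep2 : (N - 1/4) * R^d ≤ N * (R-β)^d := by
    have hmul := mul_le_mul_of_nonneg_left hBern hNpos.le
    have heq : N*(R^d*(1-dR*β)) = (N-1/4)*R^d := by
      rw [hdRβ]
      field_simp
    linarith
  have hstep1 : (1 + N*(2*N*η^d)) * ((N-1)*R^d) < (N - 1/4) * R^d := by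
    have hmulpow : η^d * R^d = (η*R)^d := (mul_pow η R d).symm
    have hA1 : 2*N^3*((η*R)^d) ≤ 2*N^3*(η*R) :=
      mul_le_mul_of_nonneg_left hγd (by positivity)
    have hB1 : (0:ℝ) < η^d * R^d := mul_pos (pow_pos hηpos d) (pow_pos hR0 d)
    nlinarith [hA1, hq18, hRd1, hmulpow, hB1, sq_nonneg N,
      mul_pos (mul_pos (by norm_num : (0:ℝ) < 2) (mul_pos hNpos hNpos)) hB1]
  rw [← mul_div_assoc, lt_div_iff₀ hNR]
  linarith

end SlimAux

open SlimAux

theorem proportional_needs_slim_pieces {d n : ℕ} (hd : 1 ≤ d) (hn : 2 ≤ n)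
    (R : ℝ) (hR : 1 ≤ R) :
    ∃ (C : Set (EuclideanSpace ℝ (Fin d))) (V : Measure (EuclideanSpace ℝ (Fin d))),
      RFat (R + 1) C ∧ IsFiniteMeasure V ∧ V ≪ volume ∧ V C ≠ 0 ∧
      ∀ m' : ℝ, 0 < m' → m' ≤ ((n : ℝ) - 1) ^ ((1 : ℝ) / d) →
        ∀ X : Fin n → Set (EuclideanSpace ℝ (Fin d)),
          (∀ i j, i ≠ j → Disjoint (X i) (X j)) →
          (⋃ i, X i) ⊆ C →
          (∀ i, RFat (m' * R) (X i)) →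
          ¬ (∀ i, V (X i) = V C / (n : ℝ≥0∞)) := by
  have hdR : (1:ℝ) ≤ (d:ℝ) := by exact_mod_cast hd
  have hN : (2:ℝ) ≤ (n:ℝ) := by exact_mod_cast hn
  have hR0 : (0:ℝ) < R := by linarith
  set dR : ℝ := (d:ℝ) with hdRdef
  set N : ℝ := (n:ℝ) with hNdef
  have hdpos : 0 < dR := by linarith
  have hNpos : 0 < N := by linarith
  set β : ℝ := 1/(4*N*dR) with hβdef
  set η : ℝ := 1/(36*dR^2*N^4*R) with hηdef
  set Δ : ℝ := (2*dR*N^2*R + 2)*η with hΔdef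
  have hηpos : 0 < η := by positivity
  have hΔpos : 0 < Δ := by positivity
  have hβpos : 0 < β := by positivity
  have hηΔ : η < Δ := by
    have h1 : (0:ℝ) < 2*dR*N^2*R + 1 := by positivity
    nlinarith [mul_pos h1 hηpos]
  have hβsmall : β ≤ 1/8 := by
    rw [hβdef]
    have h8 : (8:ℝ) ≤ 4*N*dR := by nlinarith
    rw [div_le_div_iff₀ (by positivity) (by norm_num)]
    linarith
  -- the zone bound : η + (2N-1)Δ ≤ β
  have hzone : η + (2*N-1)*Δ ≤ β := by
    have hN3 : 2*N ≤ N^3 := by nlinarith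
    have h5 : N^3 ≤ dR*N^3*R := by nlinarith [mul_nonneg (by nlinarith : (0:ℝ) ≤ dR*R - 1) (by positivity : (0:ℝ) ≤ N^3)]
    have h1 : (1 + (2*N-1)*(2*dR*N^2*R + 2)) * η ≤ (9*dR*N^3*R) * η := by
      apply mul_le_mul_of_nonneg_right _ hηpos.le
      nlinarith [mul_nonneg (by nlinarith : (0:ℝ) ≤ dR*R - 1) (by positivity : (0:ℝ) ≤ N^2)]
    have h2 : (9*dR*N^3*R) * η = 9/(36*dR*N) := by
      rw [hηdef]
      field_simp
    have h3 : (9:ℝ)/(36*dR*N) = β := by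
      rw [hβdef]
      rw [div_eq_div_iff (by positivity) (by positivity)]
      ring
    calc η + (2*N-1)*Δ = (1 + (2*N-1)*(2*dR*N^2*R + 2)) * η := by rw [hΔdef]; ring
      _ ≤ (9*dR*N^3*R) * η := h1
      _ = β := by rw [h2, h3]
  -- clusters
  set lowc : Fin (2*n) → Fin d → ℝ := fun j _ => (R+1) - η - (j:ℕ)*Δ with hlowcdef
  set cluster : Fin (2*n) → Set (EuclideanSpace ℝ (Fin d)) :=
    fun j => axisCube (lowc j) η with hclusterdef
  set A : Set (EuclideanSpace ℝ (Fin d)) := ⋃ j, cluster j with hAdef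
  set U : Set (EuclideanSpace ℝ (Fin d)) := axisCube (fun _ => 0) 1 with hUdef
  set C : Set (EuclideanSpace ℝ (Fin d)) := U ∪ A with hCdef
  have hjle : ∀ j : Fin (2*n), ((j:ℕ):ℝ) ≤ 2*N - 1 := by
    intro j
    have hlt := j.isLt
    have : (j:ℕ) ≤ 2*n - 1 := by omega
    have h2 : ((j:ℕ):ℝ) ≤ ((2*n-1 : ℕ):ℝ) := by exact_mod_cast this
    have h3 : ((2*n-1 : ℕ):ℝ) = 2*N - 1 := by
      rw [hNdef]; push_cast [Nat.cast_sub (by omega : 1 ≤ 2*n)]; ring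
    linarith
  have hjΔ : ∀ j : Fin (2*n), ((j:ℕ):ℝ)*Δ ≤ (2*N-1)*Δ :=
    fun j => mul_le_mul_of_nonneg_right (hjle j) hΔpos.le
  have hjΔ0 : ∀ j : Fin (2*n), (0:ℝ) ≤ ((j:ℕ):ℝ)*Δ :=
    fun j => mul_nonneg (Nat.cast_nonneg _) hΔpos.le
  have hlow_ge : ∀ j : Fin (2*n), R + 1 - β ≤ (R+1) - η - ((j:ℕ):ℝ)*Δ := by
    intro j
    have h1 := hjΔ j
    linarith [hzone]
  have hclusterMeas : ∀ j, MeasurableSet (cluster j) := fun j => measurableSet_axisCube _ _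
  have hAmeas : MeasurableSet A := MeasurableSet.iUnion hclusterMeas
  have hUmeas : MeasurableSet U := measurableSet_axisCube _ _
  have hclusterDisj : Pairwise (Function.onFun Disjoint cluster) := by
    intro j k hjk
    rw [Function.onFun, Set.disjoint_left]
    intro x hxj hxk
    have i0 : Fin d := ⟨0, hd⟩
    have hj0 : (R+1) - η - ((j:ℕ):ℝ)*Δ ≤ x i0 ∧ x i0 ≤ (R+1) - η - ((j:ℕ):ℝ)*Δ + η := hxj i0
    have hk0 : (R+1) - η - ((k:ℕ):ℝ)*Δ ≤ x i0 ∧ x i0 ≤ (R+1) - η - ((k:ℕ):ℝ)*Δ + η := hxk i0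
    have hne : (j:ℕ) ≠ (k:ℕ) := fun h => hjk (Fin.ext h)
    rcases Nat.lt_or_ge (j:ℕ) (k:ℕ) with h | h
    · have h1 : ((j:ℕ):ℝ) + 1 ≤ ((k:ℕ):ℝ) := by exact_mod_cast h
      have h2 : (((j:ℕ):ℝ) + 1) * Δ ≤ ((k:ℕ):ℝ) * Δ :=
        mul_le_mul_of_nonneg_right h1 hΔpos.le
      linarith [hj0.1, hj0.2, hk0.1, hk0.2, hηΔ]
    · have h0 : (k:ℕ) < (j:ℕ) := lt_of_le_of_ne h (Ne.symm hne)
      have h1 : ((k:ℕ):ℝ) + 1 ≤ ((j:ℕ):ℝ) := by exact_mod_cast h0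
      have h2 : (((k:ℕ):ℝ) + 1) * Δ ≤ ((j:ℕ):ℝ) * Δ :=
        mul_le_mul_of_nonneg_right h1 hΔpos.le
      linarith [hj0.1, hj0.2, hk0.1, hk0.2, hηΔ]
  have hvolCluster : ∀ j, volume (cluster j) = ENNReal.ofReal (η ^ d) :=
    fun j => volume_axisCube _ hηpos.le
  have hvolA : volume A = ((2*n : ℕ) : ℝ≥0∞) * ENNReal.ofReal (η ^ d) := by
    rw [hAdef, measure_iUnion hclusterDisj hclusterMeas, tsum_fintype]
    simp only [hvolCluster]
    rw [Finset.sum_const, Finset.card_univ, Fintype.card_fin, nsmul_eq_mul]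
  have hsubAC : A ⊆ C := Set.subset_union_right
  have hVCeq : (volume.restrict A) C = ((2*n : ℕ) : ℝ≥0∞) * ENNReal.ofReal (η ^ d) := by
    rw [Measure.restrict_apply' hAmeas, Set.inter_eq_self_of_subset_right hsubAC, hvolA]
  refine ⟨C, volume.restrict A, ?_, ?_, ?_, ?_, ?_⟩
  · -- RFat (R+1) C
    refine ⟨IsometryEquiv.refl _, (fun _ => 0), (fun _ => 0), 1, R+1, one_pos, ?_, ?_, ?_⟩
    · rintro x ⟨y, hy, rfl⟩
      exact Or.inl hy
    · intro x hx
      have hmem : x ∈ axisCube (fun _ => (0:ℝ)) (R+1) := by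
        intro i
        show (0:ℝ) ≤ x i ∧ x i ≤ 0 + (R + 1)
        rcases hx with hx | hx
        · have h1 : (0:ℝ) ≤ x i ∧ x i ≤ 0 + 1 := hx i
          exact ⟨h1.1, by linarith [h1.2]⟩
        · rcases Set.mem_iUnion.1 hx with ⟨j, hj⟩
          have hji : (R+1) - η - ((j:ℕ):ℝ)*Δ ≤ x i ∧ x i ≤ (R+1) - η - ((j:ℕ):ℝ)*Δ + η := hj i
          have hl := hlow_ge j
          have h0 := hjΔ0 j
          constructor
          · linarith [hji.1, hβsmall]
          · linarith [hji.2]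
      exact ⟨x, hmem, rfl⟩
    · rw [div_one]
  · -- finite
    constructor
    rw [Measure.restrict_apply_univ, hvolA]
    exact ENNReal.mul_lt_top (ENNReal.natCast_lt_top _) ENNReal.ofReal_lt_top
  · exact Measure.absolutelyContinuous_of_le Measure.restrict_le_self
  · rw [hVCeq]
    apply mul_ne_zero
    · exact_mod_cast (Nat.cast_ne_zero (R := ℝ≥0∞)).mpr (by omega)
    · exact ne_of_gt (ENNReal.ofReal_pos.2 (pow_pos hηpos d))
  · -- main impossibility
    intro m' hm'pos hm'le X hdisj hsubC hfat hall
    have hN1 : (1:ℝ) < N := by linarith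
    have hm'R : 0 < m' * R := mul_pos hm'pos hR0
    have hm'pow : m' ^ d ≤ N - 1 := by
      have h1 : m' ^ d ≤ ((N - 1) ^ ((1:ℝ)/d)) ^ d := pow_le_pow_left₀ hm'pos.le hm'le d
      rwa [rpow_one_div_pow (by linarith) hd] at h1
    have hm'leN : m' ≤ N - 1 := le_trans hm'le (rpow_one_div_le_self (by linarith) hd)
    have hncast0 : ((n:ℕ):ℝ≥0∞) ≠ 0 := Nat.cast_ne_zero.mpr (by omega)
    have hncastT : ((n:ℕ):ℝ≥0∞) ≠ ⊤ := ENNReal.natCast_ne_top n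
    have hcast : ((2*n:ℕ):ℝ≥0∞) * ENNReal.ofReal (η^d) = ENNReal.ofReal (2*N*η^d) := by
      rw [← ENNReal.ofReal_natCast (2*n), ← ENNReal.ofReal_mul (Nat.cast_nonneg _)]
      congr 1
      simp only [hNdef]
      push_cast
      ring
    -- each piece has value 2·η^d
    have hVX : ∀ i, volume (X i ∩ A) = 2 * ENNReal.ofReal (η ^ d) := by
      intro i
      have h := hall i
      rw [Measure.restrict_apply' hAmeas, hVCeq] at h
      have h2n : ((2*n:ℕ):ℝ≥0∞) = 2 * ((n:ℕ):ℝ≥0∞) := by push_cast; ring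
      have hxx : ∀ x : ℝ≥0∞, 2 * ((n:ℕ):ℝ≥0∞) * x / ((n:ℕ):ℝ≥0∞) = 2 * x := by
        intro x
        rw [mul_assoc, mul_div_assoc, mul_comm ((n:ℕ):ℝ≥0∞) x, mul_div_assoc,
          ENNReal.div_self hncast0 hncastT, mul_one]
      rw [h2n, hxx] at h
      exact h
    have hofη0 : ENNReal.ofReal (η^d) ≠ 0 := ne_of_gt (ENNReal.ofReal_pos.2 (pow_pos hηpos d))
    -- fatness data
    choose f a b L₁ L₂ hL₁pos hKsub hXsub hratio using hfat
    set K : Fin n → Set (EuclideanSpace ℝ (Fin d)) := fun i => f i '' axisCube (a i) (L₁ i)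
      with hKdef
    have hKX : ∀ i, K i ⊆ X i := hKsub
    have hXC : ∀ i, X i ⊆ C := fun i => le_trans (Set.subset_iUnion X i) hsubC
    have hKmeas : ∀ i, MeasurableSet (K i) := by
      intro i
      have himg : K i = (f i).symm ⁻¹' axisCube (a i) (L₁ i) := by
        ext y
        constructor
        · rintro ⟨x, hx, rfl⟩
          simpa using hx
        · intro hy
          exact ⟨(f i).symm y, hy, by simp⟩
      rw [himg]
      exact ((f i).symm.continuous.measurable) (measurableSet_axisCube _ _)
    have hvolK : ∀ i, volume (K i) = ENNReal.ofReal (L₁ i ^ d) := by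
      intro i
      rw [hKdef]
      rw [volume_isometryEquiv_image (f i) (measurableSet_axisCube _ _),
        volume_axisCube _ (hL₁pos i).le]
    have hKne : ∀ i, (K i).Nonempty := by
      intro i
      exact ⟨f i (WithLp.toLp 2 (a i)), ⟨WithLp.toLp 2 (a i), fun k => ⟨le_refl _, by show a i k ≤ a i k + L₁ i; linarith [hL₁pos i]⟩, rfl⟩⟩
    have hXne : ∀ i, (X i).Nonempty := fun i => (hKne i).mono (hKX i)
    have hL₂0 : ∀ i, 0 ≤ L₂ i := by
      intro i
      obtain ⟨x, hx⟩ := hXne i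
      obtain ⟨y, hy, _⟩ := hXsub i hx
      have h1 : b i ⟨0, hd⟩ ≤ y ⟨0, hd⟩ ∧ y ⟨0, hd⟩ ≤ b i ⟨0, hd⟩ + L₂ i := hy ⟨0, hd⟩
      linarith [h1.1, h1.2]
    have hdiam : ∀ i, ∀ p ∈ X i, ∀ q ∈ X i, dist p q ≤ Real.sqrt d * L₂ i := by
      intro i p hp q hq
      obtain ⟨p', hp', rfl⟩ := hXsub i hp
      obtain ⟨q', hq', rfl⟩ := hXsub i hq
      rw [(f i).dist_eq]
      apply dist_le_sqrt_mul (hL₂0 i)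
      intro k
      have h1 : b i k ≤ p' k ∧ p' k ≤ b i k + L₂ i := hp' k
      have h2 : b i k ≤ q' k ∧ q' k ≤ b i k + L₂ i := hq' k
      rw [Real.dist_eq, abs_le]
      constructor <;> [linarith [h1.1, h2.2]; linarith [h1.2, h2.1]]
    have hL₂le : ∀ i, L₂ i ≤ m' * R * L₁ i := by
      intro i
      have h := hratio i
      rw [div_le_iff₀ (hL₁pos i)] at h
      linarith [h]
    -- every piece meets the value support
    have hXA : ∀ i, ∃ p, p ∈ X i ∩ A := by
      intro i
      by_contra h
      push_neg at h
      have hemp : X i ∩ A = ∅ := Set.eq_empty_iff_forall_notMem.2 fun y hy => h y hy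
      have h0 := hVX i
      rw [hemp, measure_empty] at h0
      exact (mul_ne_zero (by norm_num) hofη0) h0.symm
    have hsq : Real.sqrt dR ≤ dR := by
      calc Real.sqrt dR ≤ Real.sqrt (dR^2) := Real.sqrt_le_sqrt (by nlinarith)
        _ = dR := by rw [Real.sqrt_sq hdpos.le]
    have hsqpos : 0 < Real.sqrt dR := Real.sqrt_pos.2 hdpos
    have hsqd : Real.sqrt (d:ℕ) = Real.sqrt dR := rfl
    -- Claim A : every piece's inner cube is big
    have hbig : ∀ i, 2*N*η^d < L₁ i ^ d := by
      intro i
      by_contra hle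
      push_neg at hle
      have h2N1 : (1:ℝ) ≤ 2*N := by linarith
      have hLle : L₁ i ≤ (2*N) ^ ((1:ℝ)/d) * η := by
        have hb : ((2*N) ^ ((1:ℝ)/d) * η) ^ d = 2*N*η^d := by
          rw [mul_pow, rpow_one_div_pow (by linarith) hd]
        have h1 : L₁ i ^ d ≤ ((2*N) ^ ((1:ℝ)/d) * η) ^ d := hb.symm ▸ hle
        exact le_of_pow_le_pow_left₀ (by omega) (by positivity) h1
      have h2N : (2*N) ^ ((1:ℝ)/d) ≤ 2*N := rpow_one_div_le_self h2N1 hd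
      have hL₂b : L₂ i ≤ (N-1)*R*(2*N*η) := by
        calc L₂ i ≤ m' * R * L₁ i := hL₂le i
          _ ≤ (N-1) * R * L₁ i := by
              apply mul_le_mul_of_nonneg_right (mul_le_mul_of_nonneg_right hm'leN hR0.le)
                (hL₁pos i).le
          _ ≤ (N-1) * R * ((2*N) ^ ((1:ℝ)/d) * η) := by
              apply mul_le_mul_of_nonneg_left hLle
              nlinarith
          _ ≤ (N-1) * R * (2*N*η) := by
              apply mul_le_mul_of_nonneg_left
                (mul_le_mul_of_nonneg_right h2N hηpos.le) (by nlinarith)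
      have hdiamX : ∀ p ∈ X i, ∀ q ∈ X i, dist p q < Δ - η := by
        intro p hp q hq
        have h1 := hdiam i p hp q hq
        rw [hsqd] at h1
        have h2 : Real.sqrt dR * L₂ i ≤ dR * L₂ i :=
          mul_le_mul_of_nonneg_right hsq (hL₂0 i)
        have h3 : dR * L₂ i ≤ dR * ((N-1)*R*(2*N*η)) :=
          mul_le_mul_of_nonneg_left hL₂b hdpos.le
        have h4 : dR * ((N-1)*R*(2*N*η)) < Δ - η := by
          have hpos1 : 0 < dR*N*R*η := by positivity
          nlinarith [hpos1]
        linarith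
      obtain ⟨p, hpX, hpA⟩ := hXA i
      obtain ⟨j, hpj⟩ := Set.mem_iUnion.1 hpA
      have hXiA : X i ∩ A ⊆ cluster j := by
        rintro y ⟨hyX, hyA⟩
        obtain ⟨k, hyk⟩ := Set.mem_iUnion.1 hyA
        rcases eq_or_ne k j with rfl | hkj
        · exact hyk
        · exfalso
          have hp0 : (R+1) - η - ((j:ℕ):ℝ)*Δ ≤ p ⟨0, hd⟩ ∧
              p ⟨0, hd⟩ ≤ (R+1) - η - ((j:ℕ):ℝ)*Δ + η := hpj ⟨0, hd⟩
          have hy0 : (R+1) - η - ((k:ℕ):ℝ)*Δ ≤ y ⟨0, hd⟩ ∧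
              y ⟨0, hd⟩ ≤ (R+1) - η - ((k:ℕ):ℝ)*Δ + η := hyk ⟨0, hd⟩
          have hne : (k:ℕ) ≠ (j:ℕ) := fun h => hkj (Fin.ext h)
          have hcoord : Δ - η ≤ |p ⟨0, hd⟩ - y ⟨0, hd⟩| := by
            rcases Nat.lt_or_ge (j:ℕ) (k:ℕ) with h | h
            · have h1 : ((j:ℕ):ℝ) + 1 ≤ ((k:ℕ):ℝ) := by exact_mod_cast h
              have h2 : (((j:ℕ):ℝ) + 1) * Δ ≤ ((k:ℕ):ℝ) * Δ :=
                mul_le_mul_of_nonneg_right h1 hΔpos.le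
              have : Δ - η ≤ p ⟨0, hd⟩ - y ⟨0, hd⟩ := by linarith [hp0.1, hy0.2]
              exact this.trans (le_abs_self _)
            · have h0 : (k:ℕ) < (j:ℕ) := lt_of_le_of_ne h hne
              have h1 : ((k:ℕ):ℝ) + 1 ≤ ((j:ℕ):ℝ) := by exact_mod_cast h0
              have h2 : (((k:ℕ):ℝ) + 1) * Δ ≤ ((j:ℕ):ℝ) * Δ :=
                mul_le_mul_of_nonneg_right h1 hΔpos.le
              have : Δ - η ≤ y ⟨0, hd⟩ - p ⟨0, hd⟩ := by linarith [hy0.1, hp0.2]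
              calc Δ - η ≤ y ⟨0, hd⟩ - p ⟨0, hd⟩ := this
                _ ≤ |y ⟨0, hd⟩ - p ⟨0, hd⟩| := le_abs_self _
                _ = |p ⟨0, hd⟩ - y ⟨0, hd⟩| := abs_sub_comm _ _
          have hd1 : dist (p ⟨0, hd⟩) (y ⟨0, hd⟩) ≤ dist p y := dist_coord_le p y ⟨0, hd⟩
          rw [Real.dist_eq] at hd1
          have := hdiamX p hpX y hyX
          linarith
      have hle2 : volume (X i ∩ A) ≤ ENNReal.ofReal (η^d) :=
        le_trans (measure_mono hXiA) (le_of_eq (hvolCluster j))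
      rw [hVX i] at hle2
      have h2 : (2:ℝ≥0∞) * ENNReal.ofReal (η^d) = ENNReal.ofReal (2*η^d) := by
        rw [ENNReal.ofReal_mul (by norm_num)]
        norm_num
      rw [h2] at hle2
      have hfin := (ENNReal.ofReal_le_ofReal_iff (by positivity)).1 hle2
      nlinarith [pow_pos hηpos d]
    -- every inner cube meets U
    have hKU : ∀ i, ∃ q, q ∈ K i ∩ U := by
      intro i
      by_contra h
      push_neg at h
      have hKA : K i ⊆ A := by
        intro y hy
        rcases hXC i (hKX i hy) with hyU | hyA
        · exact absurd ⟨hy, hyU⟩ (h y)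
        · exact hyA
      have hm : volume (K i) ≤ volume A := measure_mono hKA
      rw [hvolK i, hvolA, hcast] at hm
      have hle := (ENNReal.ofReal_le_ofReal_iff (by positivity)).1 hm
      linarith [hbig i]
    have hRβ : (0:ℝ) ≤ R - β := by linarith [hβsmall]
    -- the window of every piece spans from U to the cluster zone
    have hL₁lb : ∀ i, (R-β)^d / ((N-1)*R^d) ≤ L₁ i ^ d := by
      intro i
      obtain ⟨q, hqK, hqU⟩ := hKU i
      obtain ⟨p, hpX, hpA⟩ := hXA i
      obtain ⟨j, hpj⟩ := Set.mem_iUnion.1 hpA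
      have hgap : ∀ k : Fin d, R - β ≤ dist (p k) (q k) := by
        intro k
        have hq1 : (0:ℝ) ≤ q k ∧ q k ≤ 0 + 1 := hqU k
        have hp1 : (R+1) - η - ((j:ℕ):ℝ)*Δ ≤ p k ∧ p k ≤ (R+1) - η - ((j:ℕ):ℝ)*Δ + η := hpj k
        have hl := hlow_ge j
        rw [Real.dist_eq]
        have hineq : R - β ≤ p k - q k := by linarith [hp1.1, hq1.2]
        exact hineq.trans (le_abs_self _)
      have hlo : Real.sqrt dR * (R-β) ≤ dist p q := sqrt_mul_le_dist hRβ hgap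
      have hhi : dist p q ≤ Real.sqrt dR * L₂ i := by
        have := hdiam i p hpX q (hKX i hqK)
        rwa [hsqd] at this
      have hL₂ge : R - β ≤ L₂ i := le_of_mul_le_mul_left (hlo.trans hhi) hsqpos
      have hL₁ge : (R-β)/(m'*R) ≤ L₁ i := by
        rw [div_le_iff₀ hm'R]
        calc R - β ≤ L₂ i := hL₂ge
          _ ≤ m' * R * L₁ i := hL₂le i
          _ = L₁ i * (m' * R) := by ring
      have hpow : ((R-β)/(m'*R))^d ≤ L₁ i ^ d :=
        pow_le_pow_left₀ (by positivity) hL₁ge d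
      refine le_trans ?_ hpow
      rw [div_pow]
      have hmono : (m'*R)^d ≤ (N-1)*R^d := by
        rw [mul_pow]
        exact mul_le_mul_of_nonneg_right hm'pow (by positivity)
      exact div_le_div_of_nonneg_left (pow_nonneg hRβ d) (pow_pos hm'R d) hmono
    -- budget argument
    have hdisjKU : Pairwise (Function.onFun Disjoint (fun i => K i ∩ U)) := by
      intro i j hij
      exact (hdisj i j hij).mono (Set.inter_subset_left.trans (hKX i))
        (Set.inter_subset_left.trans (hKX j))
    have hvolU : volume U = ENNReal.ofReal 1 := by
      rw [hUdef, volume_axisCube _ (by norm_num : (0:ℝ) ≤ 1), one_pow]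
    have hsum1 : ∑ i : Fin n, volume (K i ∩ U) ≤ ENNReal.ofReal 1 := by
      rw [← tsum_fintype (L := SummationFilter.unconditional _), ← measure_iUnion hdisjKU (fun i => (hKmeas i).inter hUmeas), ← hvolU]
      exact measure_mono (Set.iUnion_subset fun i => Set.inter_subset_right)
    have hsum2 : ∀ i, ENNReal.ofReal (L₁ i ^ d) ≤ volume (K i ∩ U) + ENNReal.ofReal (2*N*η^d) := by
      intro i
      have hsplit : K i ⊆ (K i ∩ U) ∪ A := by
        intro y hy
        rcases hXC i (hKX i hy) with h | h
        · exact Or.inl ⟨hy, h⟩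
        · exact Or.inr h
      calc ENNReal.ofReal (L₁ i ^ d) = volume (K i) := (hvolK i).symm
        _ ≤ volume ((K i ∩ U) ∪ A) := measure_mono hsplit
        _ ≤ volume (K i ∩ U) + volume A := measure_union_le _ _
        _ = volume (K i ∩ U) + ENNReal.ofReal (2*N*η^d) := by rw [hvolA, hcast]
    have hNR : 0 < (N-1)*R^d := mul_pos (by linarith) (pow_pos hR0 d)
    have hT0 : 0 ≤ (R-β)^d / ((N-1)*R^d) := by positivity
    have htot : ENNReal.ofReal (N * ((R-β)^d / ((N-1)*R^d)))
        ≤ ENNReal.ofReal (1 + N*(2*N*η^d)) := by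
      have e1 : ENNReal.ofReal (N * ((R-β)^d / ((N-1)*R^d)))
          = ∑ _i : Fin n, ENNReal.ofReal ((R-β)^d / ((N-1)*R^d)) := by
        rw [Finset.sum_const, Finset.card_univ, Fintype.card_fin, nsmul_eq_mul,
          ← ENNReal.ofReal_natCast n, ← ENNReal.ofReal_mul (Nat.cast_nonneg n), hNdef]
      calc ENNReal.ofReal (N * ((R-β)^d / ((N-1)*R^d)))
          = ∑ _i : Fin n, ENNReal.ofReal ((R-β)^d / ((N-1)*R^d)) := e1
        _ ≤ ∑ i : Fin n, ENNReal.ofReal (L₁ i ^ d) :=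
            Finset.sum_le_sum fun i _ => ENNReal.ofReal_le_ofReal (hL₁lb i)
        _ ≤ ∑ i : Fin n, (volume (K i ∩ U) + ENNReal.ofReal (2*N*η^d)) :=
            Finset.sum_le_sum fun i _ => hsum2 i
        _ = (∑ i : Fin n, volume (K i ∩ U)) + ∑ _i : Fin n, ENNReal.ofReal (2*N*η^d) :=
            Finset.sum_add_distrib
        _ ≤ ENNReal.ofReal 1 + ∑ _i : Fin n, ENNReal.ofReal (2*N*η^d) :=
            add_le_add_left hsum1 _
        _ = ENNReal.ofReal (1 + N*(2*N*η^d)) := by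
            rw [Finset.sum_const, Finset.card_univ, Fintype.card_fin, nsmul_eq_mul,
              ← ENNReal.ofReal_natCast n, ← ENNReal.ofReal_mul (Nat.cast_nonneg n),
              ← ENNReal.ofReal_add (by norm_num) (by positivity), hNdef]
    have hreal : N * ((R-β)^d / ((N-1)*R^d)) ≤ 1 + N*(2*N*η^d) :=
      (ENNReal.ofReal_le_ofReal_iff (by positivity)).1 htot
    -- final numeric contradiction
    have hkey : 1 + N*(2*N*η^d) < N * ((R-β)^d / ((N-1)*R^d)) :=
      final_numeric hd hn R β η hR hβdef hηdef
    linarith
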